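/- Let D be a probability measure on α × Bool (binary classification, k = 2), Q a probability measure on Θ, and g : Θ × α → Bool a measurable classifier. If the Gibbs risk satisfies R_D(Q) ≤ 1/2, then R_D(Q) ≥ (1 − √(1 − 2·AV(Q)))/2. (Theorem 2: tighter lower bound on expected risk for the binary case.) -/

import Mathlib

open MeasureTheory

lemma integral_ite_pred_aux {Θ : Type*} [MeasurableSpace Θ] (Q : Measure Θ)
    [IsProbabilityMeasure Q] (p : Θ → Prop) [DecidablePred p]
    (hs : MeasurableSet {θ | p θ}) (a b : ℝ) :
    ∫ θ, (if p θ then a else b) ∂Q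
      = a * (Q {θ | p θ}).toReal + b * (1 - (Q {θ | p θ}).toReal) := by
  have h1 : (fun θ => if p θ then a else b) =
      fun θ => Set.indicator {θ | p θ} (fun _ => a) θ +
        Set.indicator {θ | p θ}ᶜ (fun _ => b) θ := by
    funext θ; by_cases h : p θ <;> simp [h, Set.indicator_apply]
  rw [h1]
  rw [MeasureTheory.integral_add ((integrable_const a).indicator hs)
      ((integrable_const b).indicator hs.compl),
    integral_indicator_const _ hs, integral_indicator_const _ hs.compl,
    probReal_compl_eq_one_sub hs]
  simp only [measureReal_def]
  simp [mul_comm]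

/-- Theorem 2 (tighter lower bound on expected risk for the binary case):
if `R_D(Q) ≤ 1/2` then `R_D(Q) ≥ (1 − √(1 − 2·AV(Q)))/2`. -/
theorem gibbs_risk_lower_bound_binary_of_algorithm_db_variability
    {α Θ : Type*} [MeasurableSpace α] [MeasurableSpace Θ]
    (D : Measure (α × Bool)) [IsProbabilityMeasure D]
    (Q : Measure Θ) [IsProbabilityMeasure Q]
    (g : Θ × α → Bool) (hg : Measurable g)
    (hR : (∫ p, ∫ θ, (if g (θ, p.1) ≠ p.2 then (1 : ℝ) else 0) ∂Q ∂D) ≤ 1 / 2) :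
    (∫ p, ∫ θ, (if g (θ, p.1) ≠ p.2 then (1 : ℝ) else 0) ∂Q ∂D) ≥
      (1 - Real.sqrt (1 - 2 *
        ∫ p, ∫ θ, ∫ θ',
          (if g (θ, p.1) ≠ g (θ', p.1) then (1 : ℝ) else 0) ∂Q ∂Q ∂D)) / 2 := by
  set f : α × Bool → ℝ := fun q => (Q {θ | g (θ, q.1) ≠ q.2}).toReal with hfdef
  -- measurability of the sets {θ | g (θ, x) ≠ y} and {θ | g (θ, x) = y}
  have hgm : ∀ q : α × Bool, Measurable fun θ => g (θ, q.1) := fun q =>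
    hg.comp (measurable_id.prodMk measurable_const)
  have hA : ∀ q : α × Bool, MeasurableSet {θ | g (θ, q.1) ≠ q.2} := fun q =>
    (hgm q) (MeasurableSet.compl (measurableSet_singleton q.2))
  have hB : ∀ q : α × Bool, MeasurableSet {θ | g (θ, q.1) = q.2} := fun q =>
    (hgm q) (measurableSet_singleton q.2)
  have hf0 : ∀ q, 0 ≤ f q := fun q => ENNReal.toReal_nonneg
  have hf1 : ∀ q, f q ≤ 1 := by
    intro q
    have h := prob_le_one (μ := Q) (s := {θ | g (θ, q.1) ≠ q.2})
    have h2 := ENNReal.toReal_mono ENNReal.one_ne_top h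
    simpa using h2
  have hcompl : ∀ q : α × Bool, (Q {θ | g (θ, q.1) = q.2}).toReal = 1 - f q := by
    intro q
    have hset : {θ | g (θ, q.1) = q.2} = {θ | g (θ, q.1) ≠ q.2}ᶜ := by
      ext θ; simp
    rw [hset, prob_compl_eq_one_sub (hA q),
      ENNReal.toReal_sub_of_le prob_le_one ENNReal.one_ne_top, ENNReal.toReal_one]
  -- measurability of f
  have hsm : MeasurableSet {q : (α × Bool) × Θ | g (q.2, q.1.1) ≠ q.1.2} := by
    have hm : Measurable fun q : (α × Bool) × Θ => (g (q.2, q.1.1), q.1.2) :=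
      (hg.comp (measurable_snd.prodMk (measurable_fst.comp measurable_fst))).prodMk
        (measurable_snd.comp measurable_fst)
    exact hm ((Set.toFinite {p : Bool × Bool | p.1 ≠ p.2}).measurableSet)
  have hfm : Measurable f :=
    (measurable_measure_prodMk_left (ν := Q) hsm).ennreal_toReal
  -- the inner risk integral equals f
  have hinner : ∀ q : α × Bool,
      (∫ θ, (if g (θ, q.1) ≠ q.2 then (1 : ℝ) else 0) ∂Q) = f q := by
    intro q
    rw [integral_ite_pred_aux Q (fun θ => g (θ, q.1) ≠ q.2) (hA q) 1 0]
    ring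
  -- the inner AV double integral equals 2 f (1 - f)
  have hAVin : ∀ q : α × Bool,
      (∫ θ, ∫ θ', (if g (θ, q.1) ≠ g (θ', q.1) then (1 : ℝ) else 0) ∂Q ∂Q)
        = 2 * f q * (1 - f q) := by
    intro q
    have hbool : ∀ b c d : Bool, b ≠ d → ((b ≠ c) ↔ ¬ c ≠ d) := by decide
    have h2 : ∀ θ, (∫ θ', (if g (θ, q.1) ≠ g (θ', q.1) then (1 : ℝ) else 0) ∂Q)
        = if g (θ, q.1) = q.2 then f q else 1 - f q := by
      intro θ
      by_cases hb : g (θ, q.1) = q.2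
      · have heq : (fun θ' => if g (θ, q.1) ≠ g (θ', q.1) then (1 : ℝ) else 0) =
            fun θ' => if g (θ', q.1) ≠ q.2 then (1 : ℝ) else 0 := by
          funext θ'
          rw [hb]
          by_cases h : g (θ', q.1) = q.2
          · simp [h]
          · simp [h, Ne.symm h]
        rw [heq, integral_ite_pred_aux Q (fun θ' => g (θ', q.1) ≠ q.2) (hA q) 1 0,
          if_pos hb]
        ring
      · have heq : (fun θ' => if g (θ, q.1) ≠ g (θ', q.1) then (1 : ℝ) else 0) =
            fun θ' => if g (θ', q.1) ≠ q.2 then (0 : ℝ) else 1 := by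
          funext θ'
          have h := hbool (g (θ, q.1)) (g (θ', q.1)) q.2 hb
          by_cases h' : g (θ', q.1) ≠ q.2 <;> simp only [h, h', not_true, not_false_eq_true, if_true, if_false, ite_not]
        rw [heq, integral_ite_pred_aux Q (fun θ' => g (θ', q.1) ≠ q.2) (hA q) 0 1,
          if_neg hb]
        ring
    rw [integral_congr_ae (Filter.Eventually.of_forall h2),
      integral_ite_pred_aux Q (fun θ => g (θ, q.1) = q.2) (hB q) (f q) (1 - f q),
      hcompl q]
    ring
  -- rewrite both integrals over D
  rw [integral_congr_ae (Filter.Eventually.of_forall hinner)] at hR ⊢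
  rw [integral_congr_ae (Filter.Eventually.of_forall hAVin)]
  -- integrability facts
  have hintf : Integrable f D := by
    refine (integrable_const (1 : ℝ)).mono' hfm.aestronglyMeasurable ?_
    refine Filter.Eventually.of_forall fun q => ?_
    rw [Real.norm_eq_abs, abs_of_nonneg (hf0 q)]; exact hf1 q
  have hintf2 : Integrable (fun q => f q ^ 2) D := by
    refine (integrable_const (1 : ℝ)).mono' (hfm.pow_const 2).aestronglyMeasurable ?_
    refine Filter.Eventually.of_forall fun q => ?_
    rw [Real.norm_eq_abs, abs_of_nonneg (sq_nonneg _)]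
    calc f q ^ 2 ≤ 1 ^ 2 := pow_le_pow_left₀ (hf0 q) (hf1 q) 2
      _ = 1 := one_pow 2
  set R : ℝ := ∫ q, f q ∂D with hRdef
  have hEf2 : R ^ 2 ≤ ∫ q, f q ^ 2 ∂D := by
    have hnn : 0 ≤ ∫ q, (f q - R) ^ 2 ∂D := integral_nonneg fun q => sq_nonneg _
    have hsub : Integrable (fun q => f q ^ 2 - 2 * R * f q) D :=
      hintf2.sub (hintf.const_mul (2 * R))
    have hmul : Integrable (fun q => 2 * R * f q) D := hintf.const_mul (2 * R)
    have h1 : (fun q => (f q - R) ^ 2) =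
        fun q => (f q ^ 2 - 2 * R * f q) + R ^ 2 := by funext q; ring
    rw [h1, integral_add hsub (integrable_const _),
      integral_sub hintf2 hmul, integral_const_mul, integral_const] at hnn
    simp only [measure_univ, ENNReal.toReal_one, probReal_univ, smul_eq_mul, one_mul] at hnn
    rw [← hRdef] at hnn
    nlinarith [hnn]
  have hV : (∫ q, 2 * f q * (1 - f q) ∂D) = 2 * R - 2 * ∫ q, f q ^ 2 ∂D := by
    have h1 : (fun q => 2 * f q * (1 - f q)) =
        fun q => 2 * f q - 2 * f q ^ 2 := by funext q; ring
    have hm1 : Integrable (fun q => 2 * f q) D := hintf.const_mul 2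
    have hm2 : Integrable (fun q => 2 * f q ^ 2) D := hintf2.const_mul 2
    rw [h1, integral_sub hm1 hm2, integral_const_mul, integral_const_mul, ← hRdef]
  set V : ℝ := ∫ q, 2 * f q * (1 - f q) ∂D with hVdef
  have hsq : (1 - 2 * R) ^ 2 ≤ 1 - 2 * V := by rw [hV]; nlinarith [hEf2]
  have hsqrt : 1 - 2 * R ≤ Real.sqrt (1 - 2 * V) := by
    have h := Real.sqrt_le_sqrt hsq
    rwa [Real.sqrt_sq (by linarith : (0:ℝ) ≤ 1 - 2 * R)] at h
  linarith
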